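/- Let 𝒜 be a compact IRU-set of strictly positive N×N matrices, and let 𝒜̃ be a compact set with 𝒜 ⊆ 𝒜̃ ⊆ co(𝒜). Then for every n ≥ 1, inf_{A_i∈𝒜̃} ρ(A_n⋯A_1)^{1/n} = min_{A∈𝒜} ρ(A); consequently the lower spectral radius of 𝒜̃ equals min_{A∈𝒜} ρ(A), i.e., the finiteness property holds at n = 1 for the lower spectral radius of compact positive IRU-sets. -/

import Mathlib

open Matrix

/-- Spectral radius of a real square matrix: the maximum modulus of its
(complex) eigenvalues, i.e. of the roots of the characteristic polynomial of
its complexification. -/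
noncomputable def specRad {N : ℕ} (A : Matrix (Fin N) (Fin N) ℝ) : ℝ :=
  sSup {r : ℝ | ∃ μ : ℂ, (A.map Complex.ofReal).charpoly.IsRoot μ ∧ r = ‖μ‖}

section Aux
open Polynomial

variable {n : Type*} [Fintype n] [DecidableEq n] {R : Type*} [CommRing R]

lemma eval_charpoly' (M : Matrix n n R) (r : R) :
    M.charpoly.eval r = (r • (1 : Matrix n n R) - M).det := by
  rw [Matrix.charpoly, eval_det, matPolyEquiv_charmatrix]
  simp [Matrix.scalar_apply, Matrix.smul_one_eq_diagonal]

end Aux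


namespace SpecAux

variable {N : ℕ}

lemma root_iff_det (M : Matrix (Fin N) (Fin N) ℂ) (μ : ℂ) :
    M.charpoly.IsRoot μ ↔ (μ • (1 : Matrix (Fin N) (Fin N) ℂ) - M).det = 0 := by
  rw [Polynomial.IsRoot, eval_charpoly']

lemma setFinite (A : Matrix (Fin N) (Fin N) ℝ) :
    {r : ℝ | ∃ μ : ℂ, (A.map Complex.ofReal).charpoly.IsRoot μ ∧ r = ‖μ‖}.Finite := by
  have h1 : {μ : ℂ | (A.map Complex.ofReal).charpoly.IsRoot μ}.Finite := by
    exact Polynomial.finite_setOf_isRoot (A.map Complex.ofReal).charpoly_monic.ne_zero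
  have : {r : ℝ | ∃ μ : ℂ, (A.map Complex.ofReal).charpoly.IsRoot μ ∧ r = ‖μ‖}
      = (‖·‖) '' {μ : ℂ | (A.map Complex.ofReal).charpoly.IsRoot μ} := by
    ext r; simp [Set.mem_image, eq_comm, and_comm]
  rw [this]
  exact h1.image _

lemma le_specRad_of_root {A : Matrix (Fin N) (Fin N) ℝ} {μ : ℂ}
    (h : (A.map Complex.ofReal).charpoly.IsRoot μ) : ‖μ‖ ≤ specRad A :=
  le_csSup (setFinite A).bddAbove ⟨μ, h, rfl⟩

lemma specRad_le {A : Matrix (Fin N) (Fin N) ℝ} {c : ℝ} (hc : 0 ≤ c)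
    (h : ∀ μ : ℂ, (A.map Complex.ofReal).charpoly.IsRoot μ → ‖μ‖ ≤ c) :
    specRad A ≤ c := by
  apply Real.sSup_le _ hc
  rintro r ⟨μ, hμ, rfl⟩; exact h μ hμ

lemma specRad_nonneg (A : Matrix (Fin N) (Fin N) ℝ) : 0 ≤ specRad A := by
  rcases Set.eq_empty_or_nonempty
    {r : ℝ | ∃ μ : ℂ, (A.map Complex.ofReal).charpoly.IsRoot μ ∧ r = ‖μ‖} with h | h
  · rw [specRad, h, Real.sSup_empty]
  · obtain ⟨r, μ, hμ, rfl⟩ := h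
    exact le_trans (norm_nonneg μ) (le_specRad_of_root hμ)

lemma exists_root (hN : N ≠ 0) (A : Matrix (Fin N) (Fin N) ℝ) :
    ∃ μ : ℂ, (A.map Complex.ofReal).charpoly.IsRoot μ := by
  apply Complex.exists_root
  rw [Matrix.charpoly_degree_eq_dim, Fintype.card_fin]
  exact_mod_cast Nat.pos_of_ne_zero hN

/-- eigenvector existence -/
lemma exists_eigenvector {A : Matrix (Fin N) (Fin N) ℝ} {μ : ℂ}
    (h : (A.map Complex.ofReal).charpoly.IsRoot μ) :
    ∃ x : Fin N → ℂ, x ≠ 0 ∧ (A.map Complex.ofReal) *ᵥ x = μ • x := by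
  rw [root_iff_det] at h
  obtain ⟨x, hx, hx0⟩ := (Matrix.exists_mulVec_eq_zero_iff).2 h
  refine ⟨x, hx, ?_⟩
  have := hx0
  rw [Matrix.sub_mulVec, sub_eq_zero] at this
  rw [← this, Matrix.smul_mulVec, Matrix.one_mulVec]

end SpecAux

namespace SpecAux
variable {N : ℕ}

lemma specRad_le_of_mulVec_le {A : Matrix (Fin N) (Fin N) ℝ} {v : Fin N → ℝ} {c : ℝ}
    (hA : ∀ i j, 0 ≤ A i j) (hv : ∀ i, 0 < v i) (hc : 0 ≤ c)
    (h : ∀ i, (A *ᵥ v) i ≤ c * v i) : specRad A ≤ c := by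
  apply specRad_le hc
  intro μ hμ
  obtain ⟨x, hx, hAx⟩ := exists_eigenvector hμ
  obtain ⟨i₁, hi₁⟩ := Function.ne_iff.mp hx
  have : Nonempty (Fin N) := ⟨i₁⟩
  obtain ⟨i, -, hi⟩ := Finset.exists_max_image Finset.univ
    (fun i => ‖x i‖ / v i) ⟨i₁, Finset.mem_univ i₁⟩
  have hxi : 0 < ‖x i‖ / v i := by
    have h1 : 0 < ‖x i₁‖ / v i₁ :=
      div_pos (by simpa using hi₁) (hv i₁)
    exact lt_of_lt_of_le h1 (hi i₁ (Finset.mem_univ i₁))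
  have hxi' : 0 < ‖x i‖ := by
    by_contra hcon
    push_neg at hcon
    rw [le_antisymm hcon (norm_nonneg _)] at hxi
    simp at hxi
  -- key inequality
  have hrow : μ * x i = ∑ j, (A i j : ℂ) * x j := by
    have := congrFun hAx i
    simpa [Matrix.mulVec, dotProduct, Matrix.map_apply, Pi.smul_apply, smul_eq_mul,
      mul_comm] using this.symm
  have habs : ‖μ‖ * ‖x i‖ ≤ ∑ j, A i j * ‖x j‖ := by
    rw [← norm_mul, hrow]
    refine le_trans (norm_sum_le _ _) ?_
    apply le_of_eq
    refine Finset.sum_congr rfl fun j _ => ?_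
    rw [norm_mul, Complex.norm_real, Real.norm_eq_abs, abs_of_nonneg (hA i j)]
  have hbound : ∀ j, ‖x j‖ ≤ (‖x i‖ / v i) * v j := by
    intro j
    have hj := hi j (Finset.mem_univ j)
    rw [div_le_iff₀ (hv j)] at hj
    exact hj
  have h2 : ∑ j, A i j * ‖x j‖ ≤ (‖x i‖ / v i) * (A *ᵥ v) i := by
    rw [Matrix.mulVec, dotProduct, Finset.mul_sum]
    refine Finset.sum_le_sum fun j _ => ?_
    calc A i j * ‖x j‖ ≤ A i j * ((‖x i‖ / v i) * v j) :=
          mul_le_mul_of_nonneg_left (hbound j) (hA i j)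
      _ = ‖x i‖ / v i * (A i j * v j) := by ring
  have h3 : (‖x i‖ / v i) * (A *ᵥ v) i ≤ (‖x i‖ / v i) * (c * v i) :=
    mul_le_mul_of_nonneg_left (h i) (le_of_lt hxi)
  have h4 : (‖x i‖ / v i) * (c * v i) = c * ‖x i‖ := by
    have hvi : v i ≠ 0 := ne_of_gt (hv i)
    field_simp
  have := le_trans habs (le_trans h2 (h3.trans_eq h4))
  exact le_of_mul_le_mul_right (by linarith) hxi'

end SpecAux

namespace SpecAux
variable {N : ℕ}

lemma det_sub_swap_zero {M P : Matrix (Fin N) (Fin N) ℂ} (h : (M - P).det = 0) :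
    (P - M).det = 0 := by
  rw [← neg_sub M P, Matrix.det_neg, h, mul_zero]

lemma map_matrix_pow (A : Matrix (Fin N) (Fin N) ℝ) (n : ℕ) :
    (A ^ n).map Complex.ofReal = (A.map Complex.ofReal) ^ n := by
  have h1 : ∀ B : Matrix (Fin N) (Fin N) ℝ,
      B.map Complex.ofReal = Complex.ofRealHom.mapMatrix B := fun _ => rfl
  rw [h1, h1, map_pow]

lemma root_pow_le {A : Matrix (Fin N) (Fin N) ℝ} {n : ℕ} (hn : 1 ≤ n) {μ : ℂ}
    (h : ((A ^ n).map Complex.ofReal).charpoly.IsRoot μ) :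
    ‖μ‖ ≤ specRad A ^ n := by
  set M := A.map Complex.ofReal with hM
  rw [map_matrix_pow] at h
  rw [root_iff_det] at h
  have hdet : (M ^ n - μ • (1 : Matrix (Fin N) (Fin N) ℂ)).det = 0 := det_sub_swap_zero h
  set p : Polynomial ℂ := Polynomial.X ^ n - Polynomial.C μ with hp
  have hmonic : p.Monic := Polynomial.monic_X_pow_sub_C μ (by omega)
  have hsplits : p.Splits := IsAlgClosed.splits p
  have hfactor : p = (p.roots.toList.map (fun r => Polynomial.X - Polynomial.C r)).prod := by
    conv_lhs => rw [hsplits.eq_prod_roots_of_monic hmonic]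
    rw [← Multiset.prod_toList]
    refine List.Perm.prod_eq (Multiset.coe_eq_coe.mp ?_)
    rw [Multiset.coe_toList, ← Multiset.map_coe, Multiset.coe_toList]
  have haeval : Polynomial.aeval M p = M ^ n - μ • 1 := by
    simp [hp, Algebra.algebraMap_eq_smul_one]
  have haeval2 : Polynomial.aeval M p
      = (p.roots.toList.map (fun r => M - r • (1 : Matrix (Fin N) (Fin N) ℂ))).prod := by
    conv_lhs => rw [hfactor]
    rw [map_list_prod (Polynomial.aeval M : Polynomial ℂ →ₐ[ℂ] Matrix (Fin N) (Fin N) ℂ)]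
    simp only [List.map_map]
    refine congrArg List.prod (List.map_congr_left fun r _ => ?_)
    simp [Function.comp_def, map_sub, Polynomial.aeval_X, Polynomial.aeval_C,
      Algebra.algebraMap_eq_smul_one]
  have hdet2 : ((p.roots.toList.map (fun r => M - r • (1 : Matrix (Fin N) (Fin N) ℂ))).map
      (Matrix.detMonoidHom : Matrix (Fin N) (Fin N) ℂ →* ℂ)).prod = 0 := by
    rw [← map_list_prod (Matrix.detMonoidHom : Matrix (Fin N) (Fin N) ℂ →* ℂ)]
    show (_ : Matrix (Fin N) (Fin N) ℂ).det = 0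
    rw [← haeval2, haeval, hdet]
  rw [List.prod_eq_zero_iff] at hdet2
  rw [List.mem_map] at hdet2
  obtain ⟨Q, hQmem, hQdet⟩ := hdet2
  rw [List.mem_map] at hQmem
  obtain ⟨r, hrmem, rfl⟩ := hQmem
  have hroot : M.charpoly.IsRoot r := by
    rw [root_iff_det]
    exact det_sub_swap_zero (by exact hQdet)
    
  have hrn : r ^ n = μ := by
    have : p.IsRoot r := Polynomial.isRoot_of_mem_roots (by
      rw [← Multiset.mem_toList]; exact hrmem)
    rw [hp] at this
    simpa [Polynomial.IsRoot, sub_eq_zero] using this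
  have habs : ‖μ‖ = ‖r‖ ^ n := by
    rw [← hrn, norm_pow]
  rw [habs]
  exact pow_le_pow_left₀ (norm_nonneg r) (le_specRad_of_root hroot) n

end SpecAux

namespace SpecAux
variable {N : ℕ}

lemma trace_map_ofReal (B : Matrix (Fin N) (Fin N) ℝ) :
    (B.map Complex.ofReal).trace = Complex.ofReal B.trace := by
  simp [Matrix.trace, Matrix.diag, Matrix.map_apply]

lemma abs_trace_pow_le (A : Matrix (Fin N) (Fin N) ℝ) {k : ℕ} (hk : 1 ≤ k) :
    |(A ^ k).trace| ≤ (N : ℝ) * specRad A ^ k := by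
  have hsplits : ((A ^ k).map Complex.ofReal).charpoly.Splits :=
    IsAlgClosed.splits _
  have htr : ((A ^ k).map Complex.ofReal).trace
      = ((A ^ k).map Complex.ofReal).charpoly.roots.sum :=
    Matrix.trace_eq_sum_roots_charpoly_of_splits hsplits
  have hcard : ((A ^ k).map Complex.ofReal).charpoly.roots.card = N := by
    rw [(Polynomial.splits_iff_card_roots).mp hsplits, Matrix.charpoly_natDegree_eq_dim,
      Fintype.card_fin]
  have h1 : |(A ^ k).trace| = ‖((A ^ k).map Complex.ofReal).trace‖ := by
    rw [trace_map_ofReal, Complex.norm_real, Real.norm_eq_abs]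
  rw [h1, htr]
  calc ‖((A ^ k).map Complex.ofReal).charpoly.roots.sum‖
      ≤ ((((A ^ k).map Complex.ofReal).charpoly.roots).map (‖·‖)).sum := by
        simpa using
          norm_multiset_sum_le (((A ^ k).map Complex.ofReal).charpoly.roots)
    _ ≤ ((((A ^ k).map Complex.ofReal).charpoly.roots).map (‖·‖)).card
        • (specRad A ^ k) := by
        apply Multiset.sum_le_card_nsmul
        intro x hx
        rw [Multiset.mem_map] at hx
        obtain ⟨μ, hμ, rfl⟩ := hx
        exact root_pow_le hk (Polynomial.isRoot_of_mem_roots hμ)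
    _ = (N : ℝ) * specRad A ^ k := by
        rw [Multiset.card_map, hcard, nsmul_eq_mul]

lemma pow_entry_nonneg {Q : Matrix (Fin N) (Fin N) ℝ} (hQ : ∀ i j, 0 ≤ Q i j) (k : ℕ) :
    ∀ i j, 0 ≤ (Q ^ k) i j := by
  induction k with
  | zero => intro i j; by_cases h : i = j <;> simp [h, Matrix.one_apply]
  | succ k ih =>
      intro i j
      rw [pow_succ, Matrix.mul_apply]
      exact Finset.sum_nonneg fun b _ => mul_nonneg (ih i b) (hQ b j)

lemma mulVec_mono {Q : Matrix (Fin N) (Fin N) ℝ} (hQ : ∀ i j, 0 ≤ Q i j)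
    {w w' : Fin N → ℝ} (h : ∀ j, w j ≤ w' j) : ∀ i, (Q *ᵥ w) i ≤ (Q *ᵥ w') i := by
  intro i
  simp only [Matrix.mulVec, dotProduct]
  exact Finset.sum_le_sum fun j _ => mul_le_mul_of_nonneg_left (h j) (hQ i j)

lemma pow_mulVec_ge {Q : Matrix (Fin N) (Fin N) ℝ} {v : Fin N → ℝ} {c : ℝ}
    (hQ : ∀ i j, 0 ≤ Q i j) (hv : ∀ i, 0 ≤ v i) (hc : 0 ≤ c)
    (h : ∀ i, c * v i ≤ (Q *ᵥ v) i) (k : ℕ) :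
    ∀ i, c ^ k * v i ≤ ((Q ^ k) *ᵥ v) i := by
  induction k with
  | zero => intro i; simp [Matrix.one_mulVec]
  | succ k ih =>
      intro i
      have key : ((Q ^ (k+1)) *ᵥ v) i = (Q *ᵥ ((Q ^ k) *ᵥ v)) i := by
        rw [Matrix.mulVec_mulVec, ← pow_succ']
      rw [key]
      have h1 : (Q *ᵥ (fun j => c ^ k * v j)) i ≤ (Q *ᵥ ((Q ^ k) *ᵥ v)) i :=
        mulVec_mono hQ ih i
      refine le_trans ?_ h1
      have h2 : (Q *ᵥ (fun j => c ^ k * v j)) i = c ^ k * (Q *ᵥ v) i := by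
        simp only [Matrix.mulVec, dotProduct, Finset.mul_sum]
        exact Finset.sum_congr rfl fun j _ => by ring
      rw [h2]
      calc c ^ (k + 1) * v i = c ^ k * (c * v i) := by ring
        _ ≤ c ^ k * (Q *ᵥ v) i := mul_le_mul_of_nonneg_left (h i) (pow_nonneg hc k)

end SpecAux

namespace SpecAux
variable {N : ℕ}

lemma le_specRad_of_pos (hN : N ≠ 0) {Q : Matrix (Fin N) (Fin N) ℝ}
    (hQ : ∀ i j, 0 < Q i j) {v : Fin N → ℝ} {c : ℝ}
    (hv : ∀ i, 0 < v i) (hc : 0 ≤ c)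
    (h : ∀ i, c * v i ≤ (Q *ᵥ v) i) : c ≤ specRad Q := by
  haveI hne : Nonempty (Fin N) := Fin.pos_iff_nonempty.mp (Nat.pos_of_ne_zero hN)
  have hune : (Finset.univ : Finset (Fin N)).Nonempty := Finset.univ_nonempty
  set i₀ : Fin N := Classical.arbitrary (Fin N) with hi₀
  have hpne : (Finset.univ : Finset (Fin N × Fin N)).Nonempty := Finset.univ_nonempty
  set m : ℝ := Finset.univ.inf' hpne (fun p : Fin N × Fin N => Q p.1 p.2) with hm
  have hmpos : 0 < m := by
    rw [hm, Finset.lt_inf'_iff]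
    exact fun p _ => hQ p.1 p.2
  have hmle : ∀ i j, m ≤ Q i j := fun i j =>
    Finset.inf'_le _ (Finset.mem_univ (i, j))
  set vmax : ℝ := Finset.univ.sup' hune v with hvm
  have hvmaxpos : 0 < vmax := lt_of_lt_of_le (hv i₀) (Finset.le_sup' v (Finset.mem_univ i₀))
  have hvle : ∀ i, v i ≤ vmax := fun i => Finset.le_sup' v (Finset.mem_univ i)
  have hQ0 : ∀ i j, 0 ≤ Q i j := fun i j => le_of_lt (hQ i j)
  set ρ : ℝ := specRad Q with hρ
  have hρ0 : 0 ≤ ρ := specRad_nonneg Q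
  -- main chain
  have key : ∀ k : ℕ, m * v i₀ * c ^ (k + 1) ≤ vmax * ((N : ℝ) * ρ ^ (k + 2)) := by
    intro k
    have h1 : c ^ (k + 1) * v i₀ ≤ ((Q ^ (k + 1)) *ᵥ v) i₀ :=
      pow_mulVec_ge hQ0 (fun i => le_of_lt (hv i)) hc h (k + 1) i₀
    have hpow0 : ∀ i j, 0 ≤ (Q ^ (k + 1)) i j := pow_entry_nonneg hQ0 (k + 1)
    have h2 : ((Q ^ (k + 1)) *ᵥ v) i₀ ≤ vmax * ∑ b, (Q ^ (k + 1)) i₀ b := by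
      rw [Matrix.mulVec, dotProduct, Finset.mul_sum]
      refine Finset.sum_le_sum fun b _ => ?_
      calc (Q ^ (k + 1)) i₀ b * v b ≤ (Q ^ (k + 1)) i₀ b * vmax :=
            mul_le_mul_of_nonneg_left (hvle b) (hpow0 i₀ b)
        _ = vmax * (Q ^ (k + 1)) i₀ b := by ring
    have h3 : m * ∑ b, (Q ^ (k + 1)) i₀ b ≤ (Q ^ (k + 2)) i₀ i₀ := by
      have hp : (Q ^ (k + 2)) i₀ i₀ = ∑ b, (Q ^ (k + 1)) i₀ b * Q b i₀ := by
        rw [pow_succ, Matrix.mul_apply]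
      rw [hp, Finset.mul_sum]
      refine Finset.sum_le_sum fun b _ => ?_
      calc m * (Q ^ (k + 1)) i₀ b = (Q ^ (k + 1)) i₀ b * m := by ring
        _ ≤ (Q ^ (k + 1)) i₀ b * Q b i₀ :=
            mul_le_mul_of_nonneg_left (hmle b i₀) (hpow0 i₀ b)
    have h4 : (Q ^ (k + 2)) i₀ i₀ ≤ (Q ^ (k + 2)).trace := by
      have : (Q ^ (k + 2)).trace = ∑ i, (Q ^ (k + 2)) i i := rfl
      rw [this]
      exact Finset.single_le_sum (fun i _ => pow_entry_nonneg hQ0 (k + 2) i i)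
        (Finset.mem_univ i₀)
    have h5 : (Q ^ (k + 2)).trace ≤ (N : ℝ) * ρ ^ (k + 2) :=
      le_trans (le_abs_self _) (abs_trace_pow_le Q (by omega))
    calc m * v i₀ * c ^ (k + 1) = m * (c ^ (k + 1) * v i₀) := by ring
      _ ≤ m * (vmax * ∑ b, (Q ^ (k + 1)) i₀ b) :=
          mul_le_mul_of_nonneg_left (le_trans h1 h2) (le_of_lt hmpos)
      _ = vmax * (m * ∑ b, (Q ^ (k + 1)) i₀ b) := by ring
      _ ≤ vmax * ((Q ^ (k + 2)) i₀ i₀) :=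
          mul_le_mul_of_nonneg_left h3 (le_of_lt hvmaxpos)
      _ ≤ vmax * ((N : ℝ) * ρ ^ (k + 2)) :=
          mul_le_mul_of_nonneg_left (le_trans h4 h5) (le_of_lt hvmaxpos)
  by_contra hcon
  push_neg at hcon  -- ρ < c
  have hcpos : 0 < c := lt_of_le_of_lt hρ0 hcon
  set q : ℝ := ρ / c with hq
  have hq0 : 0 ≤ q := div_nonneg hρ0 (le_of_lt hcpos)
  have hq1 : q < 1 := (div_lt_one hcpos).mpr hcon
  have hρqc : ρ = q * c := by
    rw [hq, div_mul_cancel₀]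
    exact ne_of_gt hcpos
  have key2 : ∀ k : ℕ, m * v i₀ ≤ vmax * (N : ℝ) * ρ * q ^ (k + 1) := by
    intro k
    have := key k
    have hrw : vmax * ((N : ℝ) * ρ ^ (k + 2)) = (vmax * (N : ℝ) * ρ * q ^ (k + 1)) * c ^ (k + 1) := by
      rw [show (k + 2) = (k + 1) + 1 by omega, pow_succ, hρqc, mul_pow]
      ring
    rw [hrw] at this
    exact le_of_mul_le_mul_right this (by positivity)
  have hεpos : 0 < m * v i₀ := mul_pos hmpos (hv i₀)
  have htend : Filter.Tendsto (fun k : ℕ => vmax * (N : ℝ) * ρ * q ^ (k + 1))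
      Filter.atTop (nhds 0) := by
    have h0 : Filter.Tendsto (fun k : ℕ => q ^ k) Filter.atTop (nhds 0) :=
      tendsto_pow_atTop_nhds_zero_of_lt_one hq0 hq1
    have h1 := (h0.comp (Filter.tendsto_add_atTop_nat 1)).const_mul (vmax * (N : ℝ) * ρ)
    simpa using h1
  have := (htend.eventually (gt_mem_nhds hεpos)).exists
  obtain ⟨k, hk⟩ := this
  exact absurd (key2 k) (not_le.mpr hk)

end SpecAux

namespace SpecAux
variable {N : ℕ}

lemma continuous_dotProd (x : Fin N → ℝ) : Continuous (fun a : Fin N → ℝ => a ⬝ᵥ x) := by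
  simp only [dotProduct]
  exact continuous_finset_sum _ fun j _ => (continuous_apply j).mul continuous_const

noncomputable def Phi (rows : Fin N → Set (Fin N → ℝ)) (x : Fin N → ℝ) (i : Fin N) : ℝ :=
  sInf ((fun a => a ⬝ᵥ x) '' rows i)

variable {rows : Fin N → Set (Fin N → ℝ)}

lemma Phi_le {i : Fin N} (hcomp : IsCompact (rows i)) {a : Fin N → ℝ} (ha : a ∈ rows i)
    (x : Fin N → ℝ) : Phi rows x i ≤ a ⬝ᵥ x :=
  csInf_le (hcomp.image (continuous_dotProd x)).bddBelow ⟨a, ha, rfl⟩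

lemma le_Phi {i : Fin N} (hne : (rows i).Nonempty) {c : ℝ} {x : Fin N → ℝ}
    (h : ∀ a ∈ rows i, c ≤ a ⬝ᵥ x) : c ≤ Phi rows x i := by
  apply le_csInf (hne.image _)
  rintro r ⟨a, ha, rfl⟩; exact h a ha

lemma Phi_attained {i : Fin N} (hcomp : IsCompact (rows i)) (hne : (rows i).Nonempty)
    (x : Fin N → ℝ) : ∃ a ∈ rows i, Phi rows x i = a ⬝ᵥ x := by
  obtain ⟨a, ha, hmin⟩ := hcomp.exists_isMinOn hne (continuous_dotProd x).continuousOn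
  refine ⟨a, ha, le_antisymm (Phi_le hcomp ha x) (le_Phi ⟨a, ha⟩ fun b hb => hmin hb)⟩

lemma Phi_continuous {i : Fin N} (hcomp : IsCompact (rows i)) (hne : (rows i).Nonempty)
    {Mb : ℝ} (hMb : 0 ≤ Mb) (hbd : ∀ a ∈ rows i, ∀ j, |a j| ≤ Mb) :
    Continuous (fun x => Phi rows x i) := by
  have hlip : ∀ x y : Fin N → ℝ, Phi rows x i ≤ Phi rows y i + ∑ j, Mb * |x j - y j| := by
    intro x y
    obtain ⟨a, ha, hay⟩ := Phi_attained hcomp hne y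
    calc Phi rows x i ≤ a ⬝ᵥ x := Phi_le hcomp ha x
      _ = a ⬝ᵥ y + a ⬝ᵥ (x - y) := by
          simp only [dotProduct, ← Finset.sum_add_distrib]
          refine Finset.sum_congr rfl fun j _ => ?_
          simp [Pi.sub_apply]; ring
      _ ≤ Phi rows y i + ∑ j, Mb * |x j - y j| := by
          rw [hay]
          apply add_le_add_right
          refine Finset.sum_le_sum fun j _ => ?_
          calc a j * (x - y) j ≤ |a j * (x - y) j| := le_abs_self _
            _ = |a j| * |x j - y j| := by rw [abs_mul]; rfl
            _ ≤ Mb * |x j - y j| := mul_le_mul_of_nonneg_right (hbd a ha j) (abs_nonneg _)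
  rw [Metric.continuous_iff]
  intro x ε hε
  refine ⟨ε / (Mb * N + 1), by positivity, fun y hy => ?_⟩
  have hsum : ∀ z w : Fin N → ℝ, dist z w < ε / (Mb * N + 1) →
      ∑ j, Mb * |z j - w j| < ε := by
    intro z w hzw
    calc ∑ j, Mb * |z j - w j| ≤ ∑ _j : Fin N, Mb * (ε / (Mb * N + 1)) := by
          refine Finset.sum_le_sum fun j _ => ?_
          apply mul_le_mul_of_nonneg_left _ hMb
          calc |z j - w j| = dist (z j) (w j) := (Real.dist_eq _ _).symm
            _ ≤ dist z w := dist_le_pi_dist z w j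
            _ ≤ ε / (Mb * N + 1) := le_of_lt hzw
      _ = N * (Mb * (ε / (Mb * N + 1))) := by rw [Finset.sum_const, Finset.card_univ,
          Fintype.card_fin, nsmul_eq_mul]
      _ < ε := by
          rw [div_eq_inv_mul, ← mul_assoc, ← mul_assoc]
          rw [show (N : ℝ) * Mb * (Mb * (N:ℝ) + 1)⁻¹ * ε = ((Mb * N) / (Mb * N + 1)) * ε by
            rw [div_eq_mul_inv]; ring]
          nth_rewrite 2 [show ε = 1 * ε by ring]
          apply mul_lt_mul_of_pos_right _ hε
          rw [div_lt_one (by positivity)]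
          linarith
  rw [Real.dist_eq, abs_lt]
  have hxy : dist x y < ε / (Mb * N + 1) := lt_of_le_of_lt (le_of_eq (dist_comm x y)) hy
  have e1 := hlip x y
  have e2 := hsum x y hxy
  have e3 := hlip y x
  have e4 := hsum y x hy
  constructor <;> linarith

end SpecAux

namespace SpecAux
variable {N : ℕ} {rows : Fin N → Set (Fin N → ℝ)}

lemma Phi_smul {i : Fin N} (hcomp : IsCompact (rows i)) (hne : (rows i).Nonempty)
    {c : ℝ} (hc : 0 ≤ c) (x : Fin N → ℝ) :
    Phi rows (fun j => c * x j) i = c * Phi rows x i := by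
  have hdot : ∀ a : Fin N → ℝ, a ⬝ᵥ (fun j => c * x j) = c * (a ⬝ᵥ x) := by
    intro a
    simp only [dotProduct, Finset.mul_sum]
    exact Finset.sum_congr rfl fun j _ => by ring
  apply le_antisymm
  · obtain ⟨a, ha, hax⟩ := Phi_attained hcomp hne x
    calc Phi rows (fun j => c * x j) i ≤ a ⬝ᵥ (fun j => c * x j) := Phi_le hcomp ha _
      _ = c * (a ⬝ᵥ x) := hdot a
      _ = c * Phi rows x i := by rw [← hax]
  · apply le_Phi hne
    intro a ha
    rw [hdot a]
    exact mul_le_mul_of_nonneg_left (Phi_le hcomp ha x) hc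

lemma exists_perron (hN : N ≠ 0)
    (hcomp : ∀ i, IsCompact (rows i)) (hne : ∀ i, (rows i).Nonempty)
    {m M : ℝ} (hm : 0 < m) (hbd : ∀ i, ∀ a ∈ rows i, ∀ j, m ≤ a j ∧ a j ≤ M) :
    ∃ (v : Fin N → ℝ) (lam : ℝ), (∀ i, 0 < v i) ∧ 0 < lam ∧
      ∀ i, Phi rows v i = lam * v i := by
  haveI hnem : Nonempty (Fin N) := Fin.pos_iff_nonempty.mp (Nat.pos_of_ne_zero hN)
  have hune : (Finset.univ : Finset (Fin N)).Nonempty := Finset.univ_nonempty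
  have hNpos : (0 : ℝ) < N := by exact_mod_cast Nat.pos_of_ne_zero hN
  obtain ⟨i₀⟩ := hnem
  obtain ⟨a₀, ha₀⟩ := hne i₀
  have hmM : m ≤ M := le_trans (hbd i₀ a₀ ha₀ i₀).1 (hbd i₀ a₀ ha₀ i₀).2
  have hMpos : 0 < M := lt_of_lt_of_le hm hmM
  set δ : ℝ := m / (N * M) with hδdef
  have hδpos : 0 < δ := by positivity
  set K : Set (Fin N → ℝ) := {x | (∀ i, δ ≤ x i) ∧ ∑ i, x i = 1} with hKdef
  have hIccComp : IsCompact (Set.Icc (fun _ => δ) (fun _ => (1:ℝ)) : Set (Fin N → ℝ)) :=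
    isCompact_Icc
  have hKsub : K ⊆ Set.Icc (fun _ => δ) (fun _ => (1:ℝ)) := by
    rintro x ⟨h1, h2⟩
    constructor
    · intro i; exact h1 i
    · intro i
      show x i ≤ 1
      rw [← h2]
      exact Finset.single_le_sum (fun j _ => le_trans (le_of_lt hδpos) (h1 j))
        (Finset.mem_univ i)
  have hKclosed : IsClosed K := by
    have h1 : IsClosed {x : Fin N → ℝ | ∀ i, δ ≤ x i} := by
      have he : {x : Fin N → ℝ | ∀ i, δ ≤ x i} = ⋂ i, {x : Fin N → ℝ | δ ≤ x i} := by
        ext x; simp [Set.mem_iInter]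
      rw [he]
      exact isClosed_iInter fun i => isClosed_le continuous_const (continuous_apply i)
    have h2 : IsClosed {x : Fin N → ℝ | ∑ i, x i = 1} :=
      isClosed_eq (continuous_finset_sum _ fun i _ => continuous_apply i) continuous_const
    rw [hKdef, Set.setOf_and]
    exact h1.inter h2
  have hKcomp : IsCompact K := IsCompact.of_isClosed_subset hIccComp hKclosed hKsub
  set u : Fin N → ℝ := fun _ => (N : ℝ)⁻¹ with hudef
  have hu : u ∈ K := by
    constructor
    · intro i
      show δ ≤ (N : ℝ)⁻¹
      rw [hδdef, div_le_iff₀ (by positivity)]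
      rw [show ((N:ℝ))⁻¹ * ((N:ℝ) * M) = ((N:ℝ)⁻¹ * (N:ℝ)) * M by ring,
        inv_mul_cancel₀ (ne_of_gt hNpos), one_mul]
      exact hmM
    · show ∑ _i : Fin N, (N:ℝ)⁻¹ = 1
      rw [Finset.sum_const, Finset.card_univ, Fintype.card_fin, nsmul_eq_mul,
        mul_inv_cancel₀ (ne_of_gt hNpos)]
  have hKne : K.Nonempty := ⟨u, hu⟩
  -- properties of Phi on K
  have hxpos : ∀ x ∈ K, ∀ i, 0 < x i := fun x hx i => lt_of_lt_of_le hδpos (hx.1 i)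
  have hxnneg : ∀ x ∈ K, ∀ i, 0 ≤ x i := fun x hx i => le_of_lt (hxpos x hx i)
  have hPhi_lb : ∀ x ∈ K, ∀ i, m ≤ Phi rows x i := by
    intro x hx i
    apply le_Phi (hne i)
    intro a ha
    calc m = m * ∑ j, x j := by rw [hx.2, mul_one]
      _ = ∑ j, m * x j := Finset.mul_sum _ _ _
      _ ≤ ∑ j, a j * x j := Finset.sum_le_sum fun j _ =>
          mul_le_mul_of_nonneg_right (hbd i a ha j).1 (hxnneg x hx j)
      _ = a ⬝ᵥ x := rfl
  have hPhi_ub : ∀ x ∈ K, ∀ i, Phi rows x i ≤ M := by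
    intro x hx i
    obtain ⟨a, ha⟩ := hne i
    calc Phi rows x i ≤ a ⬝ᵥ x := Phi_le (hcomp i) ha x
      _ = ∑ j, a j * x j := rfl
      _ ≤ ∑ j, M * x j := Finset.sum_le_sum fun j _ =>
          mul_le_mul_of_nonneg_right (hbd i a ha j).2 (hxnneg x hx j)
      _ = M := by rw [← Finset.mul_sum, hx.2, mul_one]
  -- the function g
  set g : (Fin N → ℝ) → ℝ := fun x => Finset.univ.inf' hune (fun i => Phi rows x i / x i)
    with hgdef
  have hPhicont : ∀ i, Continuous (fun x => Phi rows x i) := by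
    intro i
    apply Phi_continuous (hcomp i) (hne i) (le_of_lt hMpos)
    intro a ha j
    rw [abs_of_nonneg (le_trans (le_of_lt hm) (hbd i a ha j).1)]
    exact (hbd i a ha j).2
  have hgcont : ContinuousOn g K := by
    apply ContinuousOn.finset_inf'_apply hune
    intro i _
    exact (hPhicont i).continuousOn.div (continuous_apply i).continuousOn
      (fun x hx => ne_of_gt (hxpos x hx i))
  obtain ⟨v, hvK, hvmax⟩ := hKcomp.exists_isMaxOn hKne hgcont
  set lam : ℝ := g v with hlamdef
  have hvpos : ∀ i, 0 < v i := hxpos v hvK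
  have hlam_le : ∀ i, lam * v i ≤ Phi rows v i := by
    intro i
    have h1 : lam ≤ Phi rows v i / v i := Finset.inf'_le _ (Finset.mem_univ i)
    rwa [le_div_iff₀ (hvpos i)] at h1
  have hlampos : 0 < lam := by
    have hgu : g u ≤ lam := hvmax hu
    refine lt_of_lt_of_le ?_ hgu
    rw [hgdef, Finset.lt_inf'_iff]
    intro i _
    apply div_pos (lt_of_lt_of_le hm (hPhi_lb u hu i))
    exact hxpos u hu i
  refine ⟨v, lam, hvpos, hlampos, ?_⟩
  by_contra hcontra
  push_neg at hcontra
  obtain ⟨i₁, hi₁⟩ := hcontra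
  -- Wielandt argument
  set y : Fin N → ℝ := fun i => Phi rows v i with hydef
  have hy_ge : ∀ i, lam * v i ≤ y i := hlam_le
  have hy_lb : ∀ i, m ≤ y i := hPhi_lb v hvK
  have hy_pos : ∀ i, 0 < y i := fun i => lt_of_lt_of_le hm (hy_lb i)
  have hy_ub : ∀ i, y i ≤ M := hPhi_ub v hvK
  set s₀ : ℝ := ∑ i, (y i - lam * v i) with hs₀def
  have hs₀pos : 0 < s₀ := by
    apply Finset.sum_pos' (fun i _ => sub_nonneg.mpr (hy_ge i))
    refine ⟨i₁, Finset.mem_univ i₁, ?_⟩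
    have : lam * v i₁ ≠ y i₁ := fun h => hi₁ h.symm
    have h2 := hy_ge i₁
    rw [sub_pos]
    exact lt_of_le_of_ne h2 this
  have hstrict : ∀ i, lam * y i + m * s₀ ≤ Phi rows y i := by
    intro i
    apply le_Phi (hne i)
    intro a ha
    have hsplit : a ⬝ᵥ y = a ⬝ᵥ (fun j => lam * v j) + ∑ j, a j * (y j - lam * v j) := by
      simp only [dotProduct, ← Finset.sum_add_distrib]
      exact Finset.sum_congr rfl fun j _ => by ring
    rw [hsplit]
    apply add_le_add
    · calc lam * y i = lam * Phi rows v i := rfl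
        _ = Phi rows (fun j => lam * v j) i := (Phi_smul (hcomp i) (hne i)
            (le_of_lt hlampos) v).symm
        _ ≤ a ⬝ᵥ (fun j => lam * v j) := Phi_le (hcomp i) ha _
    · rw [hs₀def, Finset.mul_sum]
      refine Finset.sum_le_sum fun j _ => ?_
      exact mul_le_mul_of_nonneg_right (hbd i a ha j).1 (sub_nonneg.mpr (hy_ge j))
  -- normalize y
  set t : ℝ := ∑ i, y i with htdef
  have htpos : 0 < t := by
    apply Finset.sum_pos (fun i _ => hy_pos i) hune
  have ht_ub : t ≤ N * M := by
    calc t ≤ ∑ _i : Fin N, M := Finset.sum_le_sum fun i _ => hy_ub i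
      _ = N * M := by rw [Finset.sum_const, Finset.card_univ, Fintype.card_fin, nsmul_eq_mul]
  set z : Fin N → ℝ := fun i => t⁻¹ * y i with hzdef
  have hz : z ∈ K := by
    constructor
    · intro i
      show δ ≤ t⁻¹ * y i
      rw [hδdef]
      rw [div_le_iff₀ (by positivity)]
      have h1 : m ≤ t⁻¹ * y i * t := by
        rw [mul_comm (t⁻¹ * y i) t, ← mul_assoc, mul_inv_cancel₀ (ne_of_gt htpos), one_mul]
        exact hy_lb i
      calc m ≤ t⁻¹ * y i * t := h1
        _ ≤ t⁻¹ * y i * ((N:ℝ) * M) := by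
            apply mul_le_mul_of_nonneg_left ht_ub
            exact le_of_lt (mul_pos (inv_pos.mpr htpos) (hy_pos i))
    · show ∑ i, t⁻¹ * y i = 1
      rw [← Finset.mul_sum, ← htdef, inv_mul_cancel₀ (ne_of_gt htpos)]
  have hgz : lam < g z := by
    rw [hgdef, Finset.lt_inf'_iff]
    intro i _
    have hPz : Phi rows z i = t⁻¹ * Phi rows y i :=
      Phi_smul (hcomp i) (hne i) (by positivity) y
    have hzi : z i = t⁻¹ * y i := rfl
    rw [hPz, hzi, mul_div_mul_left _ _ (by positivity : (t:ℝ)⁻¹ ≠ 0)]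
    rw [lt_div_iff₀ (hy_pos i)]
    calc lam * y i < lam * y i + m * s₀ := by
          have : 0 < m * s₀ := mul_pos hm hs₀pos
          linarith
      _ ≤ Phi rows y i := hstrict i
  exact absurd (hvmax hz) (not_le.mpr hgz)

end SpecAux


namespace SpecAux

lemma specRad_dim_zero (A : Matrix (Fin 0) (Fin 0) ℝ) : specRad A = 0 := by
  have h : {r : ℝ | ∃ μ : ℂ, (A.map Complex.ofReal).charpoly.IsRoot μ ∧ r = ‖μ‖}
      = ∅ := by
    ext r
    simp only [Set.mem_setOf_eq, Set.mem_empty_iff_false, iff_false, not_exists]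
    intro μ ⟨hμ, _⟩
    rw [root_iff_det] at hμ
    rw [Matrix.det_isEmpty] at hμ
    exact one_ne_zero hμ
  rw [specRad, h, Real.sSup_empty]

end SpecAux

/-- An independent row uncertainty (IRU) set of matrices: the set of all
matrices whose `i`-th row belongs to a prescribed set of rows `rows i`. -/
def IsIRU {N M : ℕ} (S : Set (Matrix (Fin N) (Fin M) ℝ)) : Prop :=
  ∃ rows : Fin N → Set (Fin M → ℝ), S = {A | ∀ i, A i ∈ rows i}

/-- Lower spectral radius (joint spectral subradius) of a set of matrices,
expressed via spectral radii of finite products. -/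
noncomputable def lsr {N : ℕ} (S : Set (Matrix (Fin N) (Fin N) ℝ)) : ℝ :=
  sInf {r : ℝ | ∃ n : ℕ, 1 ≤ n ∧ ∃ A : Fin n → Matrix (Fin N) (Fin N) ℝ,
    (∀ i, A i ∈ S) ∧ r = specRad ((List.ofFn A).reverse.prod) ^ ((n : ℝ)⁻¹)}

open SpecAux in
theorem stmt_19 {N : ℕ} (S T : Set (Matrix (Fin N) (Fin N) ℝ)) (hS : IsIRU S)
    (hScomp : IsCompact S) (hSne : S.Nonempty)
    (hpos : ∀ A ∈ S, ∀ i j, 0 < A i j)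
    (hTcomp : IsCompact T) (hST : S ⊆ T) (hTco : T ⊆ convexHull ℝ S) :
    (∀ n : ℕ, 1 ≤ n →
        sInf {r : ℝ | ∃ A : Fin n → Matrix (Fin N) (Fin N) ℝ,
            (∀ i, A i ∈ T) ∧ r = specRad ((List.ofFn A).reverse.prod) ^ ((n : ℝ)⁻¹)}
          = sInf (specRad '' S)) ∧
    lsr T = sInf (specRad '' S) := by
  classical
  rcases Nat.eq_zero_or_pos N with hN0 | hNpos
  · -- degenerate case N = 0
    subst hN0
    have hzero : ∀ A : Matrix (Fin 0) (Fin 0) ℝ, specRad A = 0 := specRad_dim_zero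
    obtain ⟨A₀, hA₀⟩ := hSne
    have himg : specRad '' S = {0} := by
      apply Set.eq_singleton_iff_unique_mem.mpr
      exact ⟨⟨A₀, hA₀, hzero A₀⟩, by rintro r ⟨A, -, rfl⟩; exact hzero A⟩
    have hsetn : ∀ n : ℕ, 1 ≤ n → {r : ℝ | ∃ A : Fin n → Matrix (Fin 0) (Fin 0) ℝ,
        (∀ i, A i ∈ T) ∧ r = specRad ((List.ofFn A).reverse.prod) ^ ((n : ℝ)⁻¹)} = {0} := by
      intro n hn
      have hinv : ((n : ℝ)⁻¹) ≠ 0 := by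
        simp only [ne_eq, inv_eq_zero, Nat.cast_eq_zero]
        omega
      apply Set.eq_singleton_iff_unique_mem.mpr
      constructor
      · exact ⟨fun _ => A₀, fun _ => hST hA₀, by rw [hzero, Real.zero_rpow hinv]⟩
      · rintro r ⟨A, -, rfl⟩
        rw [hzero, Real.zero_rpow hinv]
    refine ⟨fun n hn => by rw [hsetn n hn, himg], ?_⟩
    rw [himg]
    have hls : {r : ℝ | ∃ n : ℕ, 1 ≤ n ∧ ∃ A : Fin n → Matrix (Fin 0) (Fin 0) ℝ,
        (∀ i, A i ∈ T) ∧ r = specRad ((List.ofFn A).reverse.prod) ^ ((n : ℝ)⁻¹)} = {0} := by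
      apply Set.eq_singleton_iff_unique_mem.mpr
      constructor
      · refine ⟨1, le_refl 1, fun _ => A₀, fun _ => hST hA₀, ?_⟩
        rw [hzero, Real.zero_rpow (by norm_num)]
      · rintro r ⟨n, hn, A, -, rfl⟩
        have hinv : ((n : ℝ)⁻¹) ≠ 0 := by
          simp only [ne_eq, inv_eq_zero, Nat.cast_eq_zero]
          omega
        rw [hzero, Real.zero_rpow hinv]
    rw [lsr, hls]
  · -- main case
    have hN : N ≠ 0 := by omega
    haveI hnem : Nonempty (Fin N) := Fin.pos_iff_nonempty.mp hNpos
    have hune : (Finset.univ : Finset (Fin N)).Nonempty := Finset.univ_nonempty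
    -- rows
    set rows : Fin N → Set (Fin N → ℝ) := fun i => (fun A => A i) '' S with hrowsdef
    have hrcomp : ∀ i, IsCompact (rows i) := fun i => hScomp.image (continuous_apply i)
    have hrne : ∀ i, (rows i).Nonempty := fun i => hSne.image _
    obtain ⟨rows₀, hrows₀⟩ := hS
    have mem_S_of_rows : ∀ r : Fin N → (Fin N → ℝ), (∀ i, r i ∈ rows i) →
        (Matrix.of r) ∈ S := by
      intro r hr
      rw [hrows₀]
      intro i
      obtain ⟨A, hA, hAi⟩ := hr i
      have hAS : ∀ j, A j ∈ rows₀ j := by rw [hrows₀] at hA; exact hA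
      show r i ∈ rows₀ i
      rw [← hAi]
      exact hAS i
    -- uniform entry bounds on S
    have hcont_ent : ∀ p : Fin N × Fin N,
        Continuous (fun A : Matrix (Fin N) (Fin N) ℝ => A p.1 p.2) := fun p =>
      (continuous_apply p.2).comp (continuous_apply p.1)
    have hpne : (Finset.univ : Finset (Fin N × Fin N)).Nonempty := Finset.univ_nonempty
    set fmin : Matrix (Fin N) (Fin N) ℝ → ℝ :=
      fun A => Finset.univ.inf' hpne (fun p : Fin N × Fin N => A p.1 p.2) with hfmindef
    set fmax : Matrix (Fin N) (Fin N) ℝ → ℝ :=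
      fun A => Finset.univ.sup' hpne (fun p : Fin N × Fin N => A p.1 p.2) with hfmaxdef
    have hfmincont : Continuous fmin :=
      Continuous.finset_inf'_apply hpne (fun p _ => hcont_ent p)
    have hfmaxcont : Continuous fmax :=
      Continuous.finset_sup'_apply hpne (fun p _ => hcont_ent p)
    obtain ⟨A₁, hA₁S, hA₁min⟩ := hScomp.exists_isMinOn hSne hfmincont.continuousOn
    obtain ⟨A₂, hA₂S, hA₂max⟩ := hScomp.exists_isMaxOn hSne hfmaxcont.continuousOn
    set m : ℝ := fmin A₁ with hmdef
    set M : ℝ := fmax A₂ with hMdef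
    have hm : 0 < m := by
      rw [hmdef, hfmindef, Finset.lt_inf'_iff]
      exact fun p _ => hpos A₁ hA₁S p.1 p.2
    have hent : ∀ A ∈ S, ∀ i j, m ≤ A i j ∧ A i j ≤ M := by
      intro A hA i j
      constructor
      · exact le_trans (hA₁min hA) (Finset.inf'_le _ (Finset.mem_univ (i, j)))
      · refine le_trans ?_ (hA₂max hA)
        exact Finset.le_sup' (fun p : Fin N × Fin N => A p.1 p.2) (Finset.mem_univ (i, j))
    have hbd : ∀ i, ∀ a ∈ rows i, ∀ j, m ≤ a j ∧ a j ≤ M := by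
      rintro i a ⟨A, hA, rfl⟩ j
      exact hent A hA i j
    -- Perron eigenvector
    obtain ⟨v, lam, hvpos, hlampos, hPhiv⟩ := exists_perron hN hrcomp hrne hm hbd
    have hlam0 : 0 ≤ lam := le_of_lt hlampos
    -- the minimizing matrix B
    choose arow harowmem harowval using fun i => Phi_attained (hrcomp i) (hrne i) v
    set B : Matrix (Fin N) (Fin N) ℝ := Matrix.of arow with hBdef
    have hBS : B ∈ S := mem_S_of_rows arow harowmem
    have hBv : ∀ i, (B *ᵥ v) i = lam * v i := by
      intro i
      show (B i) ⬝ᵥ v = lam * v i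
      rw [show B i = arow i from rfl, ← harowval i, hPhiv i]
    -- convex set P
    set P : Set (Matrix (Fin N) (Fin N) ℝ) :=
      {A | (∀ i j, m ≤ A i j) ∧ ∀ i, lam * v i ≤ (A *ᵥ v) i} with hPdef
    have hSP : S ⊆ P := by
      intro A hA
      constructor
      · exact fun i j => (hent A hA i j).1
      · intro i
        have h1 : Phi rows v i ≤ (A i) ⬝ᵥ v := Phi_le (hrcomp i) ⟨A, hA, rfl⟩ v
        rw [hPhiv i] at h1
        exact h1
    have hPconv : Convex ℝ P := by
      rintro A ⟨hA1, hA2⟩ C ⟨hC1, hC2⟩ a b ha hb hab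
      constructor
      · intro i j
        have : (a • A + b • C) i j = a * A i j + b * C i j := by
          simp [Matrix.add_apply, Matrix.smul_apply, smul_eq_mul]
        rw [this]
        calc m = a * m + b * m := by rw [← add_mul, hab, one_mul]
          _ ≤ a * A i j + b * C i j := add_le_add
              (mul_le_mul_of_nonneg_left (hA1 i j) ha)
              (mul_le_mul_of_nonneg_left (hC1 i j) hb)
      · intro i
        have : ((a • A + b • C) *ᵥ v) i = a * (A *ᵥ v) i + b * (C *ᵥ v) i := by
          rw [Matrix.add_mulVec, Pi.add_apply, Matrix.smul_mulVec,
            Matrix.smul_mulVec, Pi.smul_apply, Pi.smul_apply, smul_eq_mul, smul_eq_mul]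
        rw [this]
        calc lam * v i = a * (lam * v i) + b * (lam * v i) := by
              rw [← add_mul, hab, one_mul]
          _ ≤ a * (A *ᵥ v) i + b * (C *ᵥ v) i := add_le_add
              (mul_le_mul_of_nonneg_left (hA2 i) ha)
              (mul_le_mul_of_nonneg_left (hC2 i) hb)
    have hTP : T ⊆ P := fun A hA => (convexHull_min hSP hPconv) (hTco hA)
    -- spectral radius of B
    have hspecB : specRad B = lam := by
      apply le_antisymm
      · exact specRad_le_of_mulVec_le (fun i j => le_of_lt (hpos B hBS i j)) hvpos hlam0
          (fun i => le_of_eq (hBv i))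
      · exact le_specRad_of_pos hN (hpos B hBS) hvpos hlam0 (fun i => ge_of_eq (hBv i))
    have hspecS : ∀ A ∈ S, lam ≤ specRad A := fun A hA =>
      le_specRad_of_pos hN (hpos A hA) hvpos hlam0 (hSP hA).2
    have hInfS : sInf (specRad '' S) = lam := by
      apply le_antisymm
      · exact csInf_le ⟨lam, by rintro r ⟨A, hA, rfl⟩; exact hspecS A hA⟩ ⟨B, hBS, hspecB⟩
      · exact le_csInf (hSne.image _) (by rintro r ⟨A, hA, rfl⟩; exact hspecS A hA)
    -- products of matrices in P
    have hlist : ∀ L : List (Matrix (Fin N) (Fin N) ℝ), (∀ A ∈ L, A ∈ P) →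
        (∀ i, lam ^ L.length * v i ≤ (L.prod *ᵥ v) i) ∧
        (L ≠ [] → ∀ i j, 0 < L.prod i j) := by
      intro L
      induction L with
      | nil =>
          intro _
          refine ⟨fun i => ?_, fun h => absurd rfl h⟩
          simp [Matrix.one_mulVec]
      | cons A L ih =>
          intro hmem
          have hAP : A ∈ P := hmem A (List.mem_cons_self (a := A) (l := L))
          have hA0 : ∀ i j, 0 ≤ A i j := fun i j => le_trans (le_of_lt hm) (hAP.1 i j)
          obtain ⟨ihv, ihpos⟩ := ih (fun C hC => hmem C (List.mem_cons_of_mem A hC))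
          have hprod : (A :: L).prod = A * L.prod := List.prod_cons
          constructor
          · intro i
            rw [hprod]
            have hkey : ((A * L.prod) *ᵥ v) i = (A *ᵥ (L.prod *ᵥ v)) i := by
              rw [Matrix.mulVec_mulVec]
            rw [hkey]
            have h1 : (A *ᵥ (fun j => lam ^ L.length * v j)) i ≤ (A *ᵥ (L.prod *ᵥ v)) i :=
              mulVec_mono hA0 ihv i
            refine le_trans ?_ h1
            have h2 : (A *ᵥ (fun j => lam ^ L.length * v j)) i = lam ^ L.length * (A *ᵥ v) i := by
              simp only [Matrix.mulVec, dotProduct, Finset.mul_sum]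
              exact Finset.sum_congr rfl fun j _ => by ring
            rw [h2]
            calc lam ^ (A :: L).length * v i = lam ^ L.length * (lam * v i) := by
                  rw [List.length_cons, pow_succ]; ring
              _ ≤ lam ^ L.length * (A *ᵥ v) i :=
                  mul_le_mul_of_nonneg_left (hAP.2 i) (pow_nonneg hlam0 L.length)
          · intro _ i j
            rw [hprod]
            rcases List.eq_nil_or_concat L with hL | hL
            · subst hL
              simp only [List.prod_nil, mul_one]
              exact lt_of_lt_of_le hm (hAP.1 i j)
            · have hLne : L ≠ [] := by
                obtain ⟨l, a, rfl⟩ := hL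
                simp
              have hLpos := ihpos hLne
              rw [Matrix.mul_apply]
              apply Finset.sum_pos _ hune
              intro k _
              exact mul_pos (lt_of_lt_of_le hm (hAP.1 i k)) (hLpos k j)
    -- rpow cancellation
    have hrpow : ∀ n : ℕ, 1 ≤ n → ((lam ^ n : ℝ)) ^ ((n : ℝ)⁻¹) = lam := by
      intro n hn
      have hncast : ((n : ℝ)) ≠ 0 := by
        simp only [ne_eq, Nat.cast_eq_zero]; omega
      rw [← Real.rpow_natCast lam n, ← Real.rpow_mul hlam0, mul_inv_cancel₀ hncast,
        Real.rpow_one]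
    -- lower bound for arbitrary products from T
    have key_lb : ∀ n : ℕ, 1 ≤ n → ∀ A : Fin n → Matrix (Fin N) (Fin N) ℝ,
        (∀ i, A i ∈ T) → lam ≤ specRad ((List.ofFn A).reverse.prod) ^ ((n : ℝ)⁻¹) := by
      intro n hn A hA
      set L : List (Matrix (Fin N) (Fin N) ℝ) := (List.ofFn A).reverse with hLdef
      have hLmem : ∀ C ∈ L, C ∈ P := by
        intro C hC
        rw [hLdef, List.mem_reverse, List.mem_ofFn] at hC
        obtain ⟨i, rfl⟩ := hC
        exact hTP (hA i)
      have hlen : L.length = n := by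
        rw [hLdef, List.length_reverse, List.length_ofFn]
      have hLne : L ≠ [] := by
        intro h
        rw [h] at hlen
        simp at hlen
        omega
      obtain ⟨hvle, hppos⟩ := hlist L hLmem
      have hs : lam ^ n ≤ specRad L.prod := by
        apply le_specRad_of_pos hN (hppos hLne) hvpos (pow_nonneg hlam0 n)
        intro i
        have := hvle i
        rwa [hlen] at this
      calc lam = ((lam ^ n : ℝ)) ^ ((n : ℝ)⁻¹) := (hrpow n hn).symm
        _ ≤ specRad L.prod ^ ((n : ℝ)⁻¹) :=
            Real.rpow_le_rpow (pow_nonneg hlam0 n) hs (by positivity)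
    -- the constant-B product achieves lam
    have key_mem : ∀ n : ℕ, 1 ≤ n →
        specRad ((List.ofFn (fun _ : Fin n => B)).reverse.prod) ^ ((n : ℝ)⁻¹) = lam := by
      intro n hn
      have hprodB : (List.ofFn (fun _ : Fin n => B)).reverse.prod = B ^ n := by
        rw [List.ofFn_const, List.reverse_replicate, List.prod_replicate]
      rw [hprodB]
      have hR : List.replicate n B ≠ [] := by
        intro h
        have := congrArg List.length h
        simp at this
        omega
      obtain ⟨hvle, hppos⟩ := hlist (List.replicate n B)
        (fun C hC => (List.eq_of_mem_replicate hC) ▸ hSP hBS)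
      have hBn : specRad (B ^ n) = lam ^ n := by
        apply le_antisymm
        · apply specRad_le (pow_nonneg hlam0 n)
          intro μ hμ
          have := root_pow_le hn hμ
          rwa [hspecB] at this
        · have hppos' := hppos hR
          rw [List.prod_replicate] at hppos'
          apply le_specRad_of_pos hN hppos' hvpos (pow_nonneg hlam0 n)
          intro i
          have := hvle i
          rwa [List.length_replicate, List.prod_replicate] at this
      rw [hBn]
      exact hrpow n hn
    rw [hInfS]
    constructor
    · intro n hn
      apply le_antisymm
      · apply csInf_le
        · refine ⟨lam, ?_⟩
          rintro r ⟨A, hA, rfl⟩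
          exact key_lb n hn A hA
        · exact ⟨fun _ => B, fun _ => hST hBS, (key_mem n hn).symm⟩
      · apply le_csInf
        · exact ⟨lam, fun _ => B, fun _ => hST hBS, (key_mem n hn).symm⟩
        · rintro r ⟨A, hA, rfl⟩
          exact key_lb n hn A hA
    · rw [lsr]
      apply le_antisymm
      · apply csInf_le
        · refine ⟨lam, ?_⟩
          rintro r ⟨n, hn, A, hA, rfl⟩
          exact key_lb n hn A hA
        · exact ⟨1, le_refl 1, fun _ => B, fun _ => hST hBS, (key_mem 1 (le_refl 1)).symm⟩
      · apply le_csInf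
        · exact ⟨lam, 1, le_refl 1, fun _ => B, fun _ => hST hBS, (key_mem 1 (le_refl 1)).symm⟩
        · rintro r ⟨n, hn, A, hA, rfl⟩
          exact key_lb n hn A hA
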